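/- For any polynomials U, V ∈ F_q[x_1,…,x_n], the ideal generated by U^{q−1}·V^{q−1} − U^{q−1} − V^{q−1} together with HS equals the ideal generated by U and V together with HS. Equivalently, in the quotient ring R_q = F_q[x_1,…,x_n]/(HS), the ideal (U^{q−1}V^{q−1} − U^{q−1} − V^{q−1}) equals the ideal (U, V). -/
import Mathlib


open MvPolynomial

lemma pow_card_sub_self_mem {F : Type*} [Field F] [Fintype F] {n : ℕ}
    (P : MvPolynomial (Fin n) F) :
    P ^ Fintype.card F - P ∈
      Ideal.span (Set.range fun i : Fin n => X i ^ Fintype.card F - X i) := by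
  set p := ringChar F with hpdef
  haveI : Fact p.Prime := ⟨CharP.char_is_prime F p⟩
  obtain ⟨k, hcard⟩ := FiniteField.card F p
  haveI : CharP (MvPolynomial (Fin n) F) p := by infer_instance
  induction P using MvPolynomial.induction_on with
  | C a =>
      rw [← C_pow, FiniteField.pow_card, sub_self]
      exact Ideal.zero_mem _
  | add f g hf hg =>
      have : (f + g) ^ Fintype.card F = f ^ Fintype.card F + g ^ Fintype.card F := by
        rw [hcard.2]; exact add_pow_char_pow f g p k
      rw [this]
      have := Ideal.add_mem _ hf hg
      convert this using 1; ring
  | mul_X f i hf =>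
      have hX : X (R := F) i ^ Fintype.card F - X i ∈
          Ideal.span (Set.range fun i : Fin n => X i ^ Fintype.card F - X i) :=
        Ideal.subset_span ⟨i, rfl⟩
      have : (f * X i) ^ Fintype.card F - f * X i =
          f ^ Fintype.card F * (X i ^ Fintype.card F - X i) +
            (f ^ Fintype.card F - f) * X i := by ring
      rw [this]
      exact Ideal.add_mem _ (Ideal.mul_mem_left _ _ hX) (Ideal.mul_mem_right _ _ hf)

/-- For `U, V ∈ F_q[x_1,…,x_n]`, the ideal generated by
`U^{q−1}·V^{q−1} − U^{q−1} − V^{q−1}` together with the field polynomials equals the ideal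
generated by `U` and `V` together with the field polynomials. -/
theorem stmt_8 {F : Type*} [Field F] [Fintype F] {n : ℕ}
    (U V : MvPolynomial (Fin n) F) :
    Ideal.span ({U ^ (Fintype.card F - 1) * V ^ (Fintype.card F - 1) -
          U ^ (Fintype.card F - 1) - V ^ (Fintype.card F - 1)} ∪
        Set.range fun i : Fin n => X i ^ Fintype.card F - X i) =
      Ideal.span ({U, V} ∪
        Set.range fun i : Fin n => X i ^ Fintype.card F - X i) := by
  set q := Fintype.card F with hq
  have h1 : 1 < q := Fintype.one_lt_card
  obtain ⟨b, hb⟩ : ∃ b, q = b + 2 := ⟨q - 2, by omega⟩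
  have hb' : q - 1 = b + 1 := by omega
  set W : MvPolynomial (Fin n) F := U ^ (q - 1) * V ^ (q - 1) - U ^ (q - 1) - V ^ (q - 1)
    with hW
  apply le_antisymm
  · apply Ideal.span_le.2
    rintro x (rfl | ⟨i, rfl⟩)
    · -- W ∈ (U, V, HS)
      have hU : U ∈ Ideal.span ({U, V} ∪ Set.range fun i : Fin n => X i ^ q - X i) :=
        Ideal.subset_span (Or.inl (Or.inl rfl))
      have hV : V ∈ Ideal.span ({U, V} ∪ Set.range fun i : Fin n => X i ^ q - X i) :=
        Ideal.subset_span (Or.inl (Or.inr rfl))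
      have key : W = U * (U ^ b * V ^ (b+1) - U ^ b) - V * V ^ b := by
        rw [hW, hb']; ring
      rw [key]
      exact Ideal.sub_mem _ (Ideal.mul_mem_right _ _ hU) (Ideal.mul_mem_right _ _ hV)
    · exact Ideal.subset_span (Or.inr ⟨i, rfl⟩)
  · apply Ideal.span_le.2
    have hW' : W ∈ Ideal.span ({W} ∪ Set.range fun i : Fin n => X i ^ q - X i) :=
      Ideal.subset_span (Or.inl rfl)
    have hHS : ∀ P : MvPolynomial (Fin n) F, P ^ q - P ∈
        Ideal.span ({W} ∪ Set.range fun i : Fin n => X i ^ q - X i) := fun P =>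
      Ideal.span_mono Set.subset_union_right (pow_card_sub_self_mem P)
    rintro x ((rfl | rfl) | ⟨i, rfl⟩)
    · have key : x = (x ^ q - x) * (V ^ (b+1) - 1) - x * W := by
        rw [hW, hb', hb]; ring
      rw [key]
      exact Ideal.sub_mem _ (Ideal.mul_mem_right _ _ (hHS x)) (Ideal.mul_mem_left _ _ hW')
    · have key : x = (x ^ q - x) * (U ^ (b+1) - 1) - x * W := by
        rw [hW, hb', hb]; ring
      rw [key]
      exact Ideal.sub_mem _ (Ideal.mul_mem_right _ _ (hHS x)) (Ideal.mul_mem_left _ _ hW')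
    · exact Ideal.subset_span (Or.inr ⟨i, rfl⟩)
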